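/- Let (H, r) be a coquasi-triangular Hopf algebra, g ∈ H a group-like element, f: H → H a k-linear map, and X a left H-comodule. Set F = ε ∘ f. If f satisfies g⁻¹ h₁ g ⊗ f(h₂) = f(h₁) ⊗ h₂ for all h ∈ H (the bicomodule condition with twisted left coaction), then for all x ∈ X: r(x_{-2} ⊗ g) F(x_{-1}) x_0 = F(x_{-2}) r(x_{-1} ⊗ g) x_0. -/

import Mathlib

open TensorProduct Coalgebra

noncomputable section

variable (k H : Type) [Field k] [Ring H] [HopfAlgebra k H]

/-- Convolution product of two linear functionals on the coalgebra `H ⊗ H`. -/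
def convMul (f g : H ⊗[k] H →ₗ[k] k) : H ⊗[k] H →ₗ[k] k :=
  LinearMap.mul' k k ∘ₗ TensorProduct.map f g ∘ₗ (Coalgebra.comul (R := k))

/-- The coquasi-triangular axioms for a linear functional `r : H ⊗ H → k`:
`r` is convolution invertible, `r(c ⊗ ab) = r(c₁ ⊗ b) r(c₂ ⊗ a)`,
`r(ab ⊗ c) = r(a ⊗ c₁) r(b ⊗ c₂)`, and `r(a₁ ⊗ b₁) a₂b₂ = r(a₂ ⊗ b₂) b₁a₁`. -/
structure IsCQT (r : H ⊗[k] H →ₗ[k] k) : Prop where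
  conv_inv : ∃ ri : H ⊗[k] H →ₗ[k] k,
    convMul k H r ri = Coalgebra.counit ∧ convMul k H ri r = Coalgebra.counit
  ax1 : r ∘ₗ TensorProduct.map LinearMap.id (LinearMap.mul' k H) =
    LinearMap.mul' k k ∘ₗ TensorProduct.map r r ∘ₗ
      (TensorProduct.tensorTensorTensorComm k H H H H).toLinearMap ∘ₗ
      TensorProduct.map (Coalgebra.comul (R := k)) (TensorProduct.comm k H H).toLinearMap
  ax2 : r ∘ₗ TensorProduct.map (LinearMap.mul' k H) LinearMap.id =
    LinearMap.mul' k k ∘ₗ TensorProduct.map r r ∘ₗ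
      (TensorProduct.tensorTensorTensorComm k H H H H).toLinearMap ∘ₗ
      TensorProduct.map LinearMap.id (Coalgebra.comul (R := k))
  ax3 : (TensorProduct.lid k H).toLinearMap ∘ₗ
      TensorProduct.map r (LinearMap.mul' k H) ∘ₗ
      (TensorProduct.tensorTensorTensorComm k H H H H).toLinearMap ∘ₗ
      TensorProduct.map (Coalgebra.comul (R := k)) (Coalgebra.comul (R := k)) =
    (TensorProduct.lid k H).toLinearMap ∘ₗ
      TensorProduct.map r (LinearMap.mul' k H ∘ₗ (TensorProduct.comm k H H).toLinearMap) ∘ₗ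
      (TensorProduct.comm k (H ⊗[k] H) (H ⊗[k] H)).toLinearMap ∘ₗ
      (TensorProduct.tensorTensorTensorComm k H H H H).toLinearMap ∘ₗ
      TensorProduct.map (Coalgebra.comul (R := k)) (Coalgebra.comul (R := k))

/-- A group-like element: `Δ(g) = g ⊗ g` and `ε(g) = 1`. -/
def IsGroupLike (g : H) : Prop :=
  Coalgebra.comul (R := k) g = g ⊗ₜ[k] g ∧ Coalgebra.counit (R := k) g = (1 : k)

lemma rg_mul_aux (r : H ⊗[k] H →ₗ[k] k) (hr : IsCQT k H r) (g : H) (hg : IsGroupLike k H g)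
    (a b : H) : r ((a * b) ⊗ₜ[k] g) = r (a ⊗ₜ[k] g) * r (b ⊗ₜ[k] g) := by
  have h := LinearMap.congr_fun hr.ax2 ((a ⊗ₜ[k] b) ⊗ₜ[k] g)
  simpa [hg.1] using h

lemma rg_one_aux (r : H ⊗[k] H →ₗ[k] k) (hr : IsCQT k H r) (g : H) (hg : IsGroupLike k H g) :
    r ((1 : H) ⊗ₜ[k] g) = 1 := by
  obtain ⟨ri, h1, -⟩ := hr.conv_inv
  have h2 := LinearMap.congr_fun h1 ((1 : H) ⊗ₜ[k] g)
  rw [convMul] at h2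
  have hco : Coalgebra.comul (R := k) ((1 : H) ⊗ₜ[k] g) =
      ((1 : H) ⊗ₜ[k] g) ⊗ₜ[k] ((1 : H) ⊗ₜ[k] g) := by
    simp [TensorProduct.comul_def, hg.1, Algebra.TensorProduct.one_def]
  have hcu : Coalgebra.counit (R := k) ((1 : H) ⊗ₜ[k] g) = (1 : k) := by
    simp [TensorProduct.counit_def, hg.2]
  have hinv : r ((1 : H) ⊗ₜ[k] g) * ri ((1 : H) ⊗ₜ[k] g) = 1 := by
    rw [LinearMap.comp_apply, LinearMap.comp_apply, hco, hcu] at h2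
    simpa using h2
  have hsq := rg_mul_aux k H r hr g hg 1 1
  rw [one_mul] at hsq
  calc r ((1 : H) ⊗ₜ[k] g)
      = r ((1 : H) ⊗ₜ[k] g) * (r ((1 : H) ⊗ₜ[k] g) * ri ((1 : H) ⊗ₜ[k] g)) := by
        rw [hinv, mul_one]
    _ = (r ((1 : H) ⊗ₜ[k] g) * r ((1 : H) ⊗ₜ[k] g)) * ri ((1 : H) ⊗ₜ[k] g) := by ring
    _ = r ((1 : H) ⊗ₜ[k] g) * ri ((1 : H) ⊗ₜ[k] g) := by rw [← hsq]
    _ = 1 := hinv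

lemma aux_map (φ ψ : H →ₗ[k] k) (X : Type) [AddCommGroup X] [Module k X] (t : H ⊗[k] X) :
    (TensorProduct.lid k X)
      ((TensorProduct.map φ ((TensorProduct.lid k X).toLinearMap ∘ₗ
          TensorProduct.map ψ LinearMap.id))
        ((TensorProduct.assoc k H H X)
          ((TensorProduct.map (Coalgebra.comul (R := k)) LinearMap.id) t))) =
    (TensorProduct.lid k X)
      ((TensorProduct.map
          (LinearMap.mul' k k ∘ₗ TensorProduct.map φ ψ ∘ₗ Coalgebra.comul (R := k))
          LinearMap.id) t) := by
  induction t using TensorProduct.induction_on with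
  | zero => simp
  | tmul h x =>
    have c := Coalgebra.Repr.arbitrary k h
    simp only [TensorProduct.map_tmul, LinearMap.id_coe, id_eq, LinearMap.comp_apply, ← c.eq]
    simp [TensorProduct.sum_tmul, Finset.sum_smul, smul_smul, mul_comm]
  | add a b ha hb => simp only [map_add, ha, hb]

/-- let `(H, r)` be coquasi-triangular, `g` group-like with inverse `g'`,
`f : H → H` linear with `g⁻¹ h₁ g ⊗ f(h₂) = f(h₁) ⊗ h₂`, and set `F = ε ∘ f`. Then for
every left `H`-comodule `X` and `x ∈ X`,
`r(x₋₂ ⊗ g) F(x₋₁) x₀ = F(x₋₂) r(x₋₁ ⊗ g) x₀`. -/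
theorem rForm_counit_f_commute (r : H ⊗[k] H →ₗ[k] k) (hr : IsCQT k H r)
    (g g' : H) (hg : IsGroupLike k H g) (hg' : g' * g = 1 ∧ g * g' = 1)
    (f : H →ₗ[k] H)
    (hf : ∀ h : H,
      (TensorProduct.map (LinearMap.mulLeft k g' ∘ₗ LinearMap.mulRight k g) f)
          (Coalgebra.comul (R := k) h) =
        (TensorProduct.map f LinearMap.id) (Coalgebra.comul (R := k) h))
    (X : Type) [AddCommGroup X] [Module k X] (ρ : X →ₗ[k] H ⊗[k] X)
    (hcoassoc : ∀ x : X,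
      (TensorProduct.assoc k H H X)
        ((TensorProduct.map (Coalgebra.comul (R := k)) LinearMap.id) (ρ x)) =
      (TensorProduct.map LinearMap.id ρ) (ρ x))
    (hcounit : ∀ x : X,
      (TensorProduct.lid k X)
        ((TensorProduct.map (Coalgebra.counit (R := k)) LinearMap.id) (ρ x)) = x) :
    ∀ x : X,
      ((TensorProduct.lid k X).toLinearMap ∘ₗ
        TensorProduct.map (r ∘ₗ ((TensorProduct.mk k H H).flip g))
          ((TensorProduct.lid k X).toLinearMap ∘ₗ
            TensorProduct.map ((Coalgebra.counit (R := k)) ∘ₗ f) LinearMap.id))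
        ((TensorProduct.map LinearMap.id ρ) (ρ x)) =
      ((TensorProduct.lid k X).toLinearMap ∘ₗ
        TensorProduct.map ((Coalgebra.counit (R := k)) ∘ₗ f)
          ((TensorProduct.lid k X).toLinearMap ∘ₗ
            TensorProduct.map (r ∘ₗ ((TensorProduct.mk k H H).flip g)) LinearMap.id))
        ((TensorProduct.map LinearMap.id ρ) (ρ x)) := by
  intro x
  have hconj : ∀ a : H, r ((g' * (a * g)) ⊗ₜ[k] g) = r (a ⊗ₜ[k] g) := by
    intro a
    have h1 : r (g' ⊗ₜ[k] g) * r (g ⊗ₜ[k] g) = 1 := by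
      rw [← rg_mul_aux k H r hr g hg, hg'.1, rg_one_aux k H r hr g hg]
    rw [rg_mul_aux k H r hr g hg, rg_mul_aux k H r hr g hg]
    calc r (g' ⊗ₜ[k] g) * (r (a ⊗ₜ[k] g) * r (g ⊗ₜ[k] g))
        = (r (g' ⊗ₜ[k] g) * r (g ⊗ₜ[k] g)) * r (a ⊗ₜ[k] g) := by ring
      _ = r (a ⊗ₜ[k] g) := by rw [h1, one_mul]
  have hcg' : Coalgebra.counit (R := k) g' = 1 := by
    have h2 : Coalgebra.counit (R := k) (g' * g) = 1 := by rw [hg'.1]; simp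
    rwa [Bialgebra.counit_mul, hg.2, mul_one] at h2
  have hkey : (LinearMap.mul' k k ∘ₗ
        TensorProduct.map (r ∘ₗ ((TensorProduct.mk k H H).flip g))
          ((Coalgebra.counit (R := k)) ∘ₗ f) ∘ₗ Coalgebra.comul (R := k)) =
      (LinearMap.mul' k k ∘ₗ
        TensorProduct.map ((Coalgebra.counit (R := k)) ∘ₗ f)
          (r ∘ₗ ((TensorProduct.mk k H H).flip g)) ∘ₗ Coalgebra.comul (R := k)) := by
    apply LinearMap.ext; intro h
    have c := Coalgebra.Repr.arbitrary k h
    have hsum1 : ∑ i ∈ c.index, Coalgebra.counit (R := k) (c.right i) • c.left i = h := by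
      have h1 := congrArg (TensorProduct.rid k H) (Coalgebra.sum_tmul_counit_eq (R := k) c)
      rw [map_sum] at h1
      simp only [TensorProduct.rid_tmul, one_smul] at h1
      exact h1
    have hsum2 : ∑ i ∈ c.index, Coalgebra.counit (R := k) (c.left i) • c.right i = h := by
      have h1 := congrArg (TensorProduct.lid k H) (Coalgebra.sum_counit_tmul_eq (R := k) c)
      rw [map_sum] at h1
      simp only [TensorProduct.lid_tmul, one_smul] at h1
      exact h1
    have hfh := hf h
    rw [← c.eq] at hfh
    simp only [map_sum, TensorProduct.map_tmul, LinearMap.comp_apply,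
      LinearMap.mulLeft_apply, LinearMap.mulRight_apply, LinearMap.id_coe, id_eq] at hfh
    have S1 : ∑ i ∈ c.index, r (f (c.left i) ⊗ₜ[k] g) * Coalgebra.counit (R := k) (c.right i)
        = r (f h ⊗ₜ[k] g) := by
      have h1 := congrArg ((r ∘ₗ ((TensorProduct.mk k H H).flip g)) ∘ₗ f) hsum1
      simpa [mul_comm] using h1
    have S2 : ∑ i ∈ c.index, Coalgebra.counit (R := k) (c.left i) * r (f (c.right i) ⊗ₜ[k] g)
        = r (f h ⊗ₜ[k] g) := by
      have h1 := congrArg ((r ∘ₗ ((TensorProduct.mk k H H).flip g)) ∘ₗ f) hsum2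
      simpa using h1
    have eA : ∑ i ∈ c.index, r (c.left i ⊗ₜ[k] g) * Coalgebra.counit (R := k) (f (c.right i))
        = ∑ i ∈ c.index, r (f (c.left i) ⊗ₜ[k] g) * Coalgebra.counit (R := k) (c.right i) := by
      have := congrArg (fun t : H ⊗[k] H => (LinearMap.mul' k k)
        ((TensorProduct.map (r ∘ₗ ((TensorProduct.mk k H H).flip g))
          (Coalgebra.counit (R := k))) t)) hfh
      simpa [hconj] using this
    have eB : ∑ i ∈ c.index, Coalgebra.counit (R := k) (c.left i) * r (f (c.right i) ⊗ₜ[k] g)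
        = ∑ i ∈ c.index, Coalgebra.counit (R := k) (f (c.left i)) * r (c.right i ⊗ₜ[k] g) := by
      have := congrArg (fun t : H ⊗[k] H => (LinearMap.mul' k k)
        ((TensorProduct.map (Coalgebra.counit (R := k))
          (r ∘ₗ ((TensorProduct.mk k H H).flip g))) t)) hfh
      simpa [Bialgebra.counit_mul, hcg', hg.2] using this
    simp only [LinearMap.comp_apply]
    rw [← c.eq]
    simp only [map_sum, TensorProduct.map_tmul, LinearMap.comp_apply, LinearMap.mul'_apply,
      TensorProduct.mk_apply, LinearMap.flip_apply]
    rw [eA, S1, ← S2, eB]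
  have hx := hcoassoc x
  simp only [LinearMap.comp_apply, LinearEquiv.coe_coe]
  rw [← hx]
  rw [aux_map k H (r ∘ₗ ((TensorProduct.mk k H H).flip g))
      ((Coalgebra.counit (R := k)) ∘ₗ f) X (ρ x),
    aux_map k H ((Coalgebra.counit (R := k)) ∘ₗ f)
      (r ∘ₗ ((TensorProduct.mk k H H).flip g)) X (ρ x), hkey]

end
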